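/- Let P : ℤ → ℝ² satisfy: for all i ≥ N, the triples (Pᵢ, Pᵢ₊₁, Pᵢ₊₂) and (Pᵢ, Pᵢ₊₁, Pᵢ₊ₖ₊₁) are positively oriented and Pᵢ₊ₖ lies in the interior of triangle (Pᵢ, Pᵢ₊₁, Pᵢ₊ₖ₊₁) (type-α spiral condition with k ≥ 3). Then for all i > N, the triple (Pᵢ, Pᵢ₊ₖ, Pᵢ₊₂ₖ) is positively oriented. -/
import Mathlib


def det2 (u v : ℝ × ℝ) : ℝ := u.1 * v.2 - u.2 * v.1

def ori (A B C : ℝ × ℝ) : ℝ := det2 (B - A) (C - B)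

def inTriangle (A B C W : ℝ × ℝ) : Prop :=
  ∃ l₁ l₂ l₃ : ℝ, l₁ ∈ Set.Ioo (0:ℝ) 1 ∧ l₂ ∈ Set.Ioo (0:ℝ) 1 ∧
    l₃ ∈ Set.Ioo (0:ℝ) 1 ∧ l₁ + l₂ + l₃ = 1 ∧ W = l₁ • A + l₂ • B + l₃ • C

lemma ori_of_inTriangle {A B C W : ℝ × ℝ} (hT : 0 < ori A B C) (h : inTriangle A B C W) :
    0 < ori A B W ∧ 0 < ori B C W ∧ 0 < ori C A W := by
  obtain ⟨l₁, l₂, l₃, h₁, h₂, h₃, hsum, hW⟩ := h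
  have hl₃ : l₃ = 1 - l₁ - l₂ := by linarith
  subst hW; subst hl₃
  refine ⟨?_, ?_, ?_⟩ <;>
  · simp only [ori, det2, Prod.fst_sub, Prod.snd_sub, Prod.fst_add, Prod.snd_add,
      Prod.smul_fst, Prod.smul_snd, smul_eq_mul] at hT ⊢
    nlinarith [h₁.1, h₂.1, h₃.1, hT]

theorem stmt8 (P : ℤ → ℝ × ℝ) (k N : ℤ) (hk : 3 ≤ k)
    (hspiral : ∀ i ≥ N, 0 < ori (P i) (P (i+1)) (P (i+2)) ∧
      0 < ori (P i) (P (i+1)) (P (i+k+1)) ∧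
      inTriangle (P i) (P (i+1)) (P (i+k+1)) (P (i+k))) :
    ∀ i > N, 0 < ori (P i) (P (i+k)) (P (i+2*k)) := by
  intro i hi
  have hA := hspiral (i-1) (by omega)
  have hB := hspiral i (by omega)
  have hC := hspiral (i+k-1) (by omega)
  have hD := hspiral (i+k) (by omega)
  rw [show i-1+1 = i by ring, show i-1+k+1 = i+k by ring, show i-1+k = i+k-1 by ring] at hA
  rw [show i+k-1+1 = i+k by ring, show i+k-1+k+1 = i+2*k by ring,
    show i+k-1+2 = i+k+1 by ring] at hC
  rw [show i+k+k = i+2*k by ring] at hD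
  have F1 : 0 < ori (P i) (P (i+k)) (P (i+k-1)) :=
    (ori_of_inTriangle hA.2.1 hA.2.2).2.1
  have F2 : 0 < ori (P (i+k+1)) (P i) (P (i+k)) :=
    (ori_of_inTriangle hB.2.1 hB.2.2).2.2
  have F3 : 0 < ori (P (i+k-1)) (P (i+k)) (P (i+k+1)) := hC.1
  have F4 : 0 < ori (P (i+k-1)) (P (i+k)) (P (i+2*k)) := hC.2.1
  have F5 : 0 < ori (P (i+k)) (P (i+k+1)) (P (i+2*k)) :=
    (ori_of_inTriangle hD.2.1 hD.2.2).1
  simp only [ori, det2, Prod.fst_sub, Prod.snd_sub] at F1 F2 F3 F4 F5 ⊢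
  nlinarith [mul_pos F2 F4, mul_pos F1 F5, mul_pos F3 F4, F3]
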